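/- arXiv:1504.04442 — 2 statements merged into one kernel-verified Lean document; each statement's English description precedes it below -/
import Mathlib

section
/- If |q| = 1 and q ∈ ℂ \ {±1}, then the Hermitian conjugate (conjugate transpose) of the Drinfeld–Jimbo R-matrix equals P R⁻¹ P, where P is the permutation matrix on ℂ^n ⊗ ℂ^n. -/
open Matrix

/-- The standard Drinfeld–Jimbo R-matrix as an `n² × n²` complex matrix. -/
noncomputable def DJ (n : ℕ) (q : ℂ) : Matrix (Fin n × Fin n) (Fin n × Fin n) ℂ :=
  fun p r => (if p.1 = r.2 ∧ p.2 = r.1 then (if p.1 = p.2 then q else 1) else 0)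
    + (if p = r ∧ p.1 < p.2 then q - q⁻¹ else 0)

/-- The flip (permutation) operator `P` on `ℂ^n ⊗ ℂ^n`. -/
def flipMat (n : ℕ) : Matrix (Fin n × Fin n) (Fin n × Fin n) ℂ :=
  fun p r => if p.1 = r.2 ∧ p.2 = r.1 then 1 else 0

lemma flip_mul {n : ℕ} (A : Matrix (Fin n × Fin n) (Fin n × Fin n) ℂ) :
    flipMat n * A = fun p s => A (p.2, p.1) s := by
  ext p s
  simp only [Matrix.mul_apply, flipMat]
  have h : ∀ r : Fin n × Fin n, (p.1 = r.2 ∧ p.2 = r.1) = ((p.2, p.1) = r) := by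
    intro r; simp [Prod.ext_iff, eq_comm, and_comm]
  simp_rw [h, ite_mul, one_mul, zero_mul, Finset.sum_ite_eq, Finset.mem_univ, if_true]

lemma mul_flip {n : ℕ} (A : Matrix (Fin n × Fin n) (Fin n × Fin n) ℂ) :
    A * flipMat n = fun p s => A p (s.2, s.1) := by
  ext p s
  simp only [Matrix.mul_apply, flipMat]
  have h : ∀ r : Fin n × Fin n, (r.1 = s.2 ∧ r.2 = s.1) = (r = (s.2, s.1)) := by
    intro r; simp [Prod.ext_iff]
  simp_rw [h, mul_ite, mul_one, mul_zero, Finset.sum_ite_eq', Finset.mem_univ, if_true]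

lemma flipMat_flip_flip (n : ℕ) : flipMat n * flipMat n = 1 := by
  rw [flip_mul]
  ext p s
  simp [flipMat, Matrix.one_apply, Prod.ext_iff, eq_comm, and_comm]

lemma dj_sum {n : ℕ} (q : ℂ) (f : Fin n × Fin n → ℂ) (p : Fin n × Fin n) :
    ∑ r, (DJ n q) p r * f r
      = (if p.1 = p.2 then q else 1) * f (p.2, p.1)
        + (if p.1 < p.2 then (q - q⁻¹) * f p else 0) := by
  have h1 : ∀ r : Fin n × Fin n, (p.1 = r.2 ∧ p.2 = r.1) = ((p.2, p.1) = r) := by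
    intro r; simp [Prod.ext_iff, eq_comm, and_comm]
  by_cases hp : p.1 < p.2 <;>
    simp only [DJ, h1, hp, and_true, and_false, if_true, if_false, add_mul, zero_mul,
      add_zero, Finset.sum_add_distrib, ite_mul, zero_mul, Finset.sum_ite_eq,
      Finset.mem_univ, if_true]

lemma conjDJ {n : ℕ} (q : ℂ) (hc : (starRingEnd ℂ) q = q⁻¹) (x y : Fin n × Fin n) :
    (starRingEnd ℂ) ((DJ n q) x y)
      = (if x.1 = y.2 ∧ x.2 = y.1 then (if x.1 = x.2 then q⁻¹ else 1) else 0)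
        + (if x = y ∧ x.1 < x.2 then q⁻¹ - q else 0) := by
  have hcinv : (starRingEnd ℂ) q⁻¹ = q := by rw [map_inv₀, hc, inv_inv]
  simp only [DJ, map_add, apply_ite (starRingEnd ℂ), map_sub, hc, hcinv,
    _root_.map_one, map_zero]

lemma key {n : ℕ} (q : ℂ) (hq0 : q ≠ 0) (hc : (starRingEnd ℂ) q = q⁻¹) :
    DJ n q * (flipMat n * (DJ n q)ᴴ * flipMat n) = 1 := by
  have expand : (flipMat n * (DJ n q)ᴴ * flipMat n)
      = fun r t => (starRingEnd ℂ) ((DJ n q) (t.2, t.1) (r.2, r.1)) := by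
    rw [mul_flip, flip_mul]
    ext r t
    simp [Matrix.conjTranspose_apply]
  ext p s
  rw [Matrix.mul_apply]
  simp_rw [expand]
  rw [dj_sum q (fun r => (starRingEnd ℂ) ((DJ n q) (s.2, s.1) (r.2, r.1))) p]
  obtain ⟨a, b⟩ := p
  obtain ⟨c, d⟩ := s
  simp only [conjDJ q hc, Matrix.one_apply, Prod.ext_iff, Prod.mk.injEq]
  split_ifs <;> try ring
  all_goals try omega
  all_goals try field_simp
  all_goals try (exfalso; omega)

/-- If `|q| = 1` and `q ≠ ±1`, the conjugate transpose of the Drinfeld–Jimbo R-matrix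
equals `P R⁻¹ P`. -/
theorem DJ_dagger (n : ℕ) (q : ℂ) (hq : ‖q‖ = 1) (h1 : q ≠ 1) (h2 : q ≠ -1) :
    (DJ n q)ᴴ = flipMat n * (DJ n q)⁻¹ * flipMat n := by
  have hq0 : q ≠ 0 := by
    intro h; simp [h] at hq
  have hmul : q * (starRingEnd ℂ) q = 1 := by
    rw [Complex.mul_conj, Complex.normSq_eq_norm_sq, hq]; norm_num
  have hc : (starRingEnd ℂ) q = q⁻¹ := (inv_eq_of_mul_eq_one_right hmul).symm
  rw [Matrix.inv_eq_right_inv (key q hq0 hc)]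
  simp only [Matrix.mul_assoc]
  rw [flipMat_flip_flip, Matrix.mul_one, ← Matrix.mul_assoc, flipMat_flip_flip, Matrix.one_mul]
end

section
/- Let R be a Hecke-type R-matrix with eigenvalue parameter q such that the q-numbers i_q = (q^i − q^{−i})/(q − q^{−1}) are nonzero for i = 2, …, n. Then the q-antisymmetrizers defined inductively by A^(1) = I and A^(i) = ((i−1)_q / i_q) · A^(i−1) (q^{i−1}/(i−1)_q · I − R_{i−1}) A^(i−1) are idempotent: (A^(i))² = A^(i) for all i ≤ n. -/
/-- The q-number `i_q = (q^i − q^{−i})/(q − q^{−1})`. -/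
noncomputable def qnum (q : ℂ) (i : ℕ) : ℂ := (q ^ i - q⁻¹ ^ i) / (q - q⁻¹)

/-- The q-antisymmetrizers: `Asym q R 1 = 1` and
`Asym q R i = ((i−1)_q / i_q) • Asym q R (i−1) * (q^{i−1}/(i−1)_q • 1 − R (i−1)) * Asym q R (i−1)`.
Here `R k` is the image of the `k`-th braid generator acting on the `k`-th and `(k+1)`-th
tensor factors; extension of `A^{(i−1)}` by the identity on the last factor is implicit. -/
noncomputable def Asym {A : Type*} [Ring A] [Algebra ℂ A] (q : ℂ) (R : ℕ → A) : ℕ → A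
  | 0 => 1
  | 1 => 1
  | (k + 2) =>
      (qnum q (k + 1) / qnum q (k + 2)) •
        (Asym q R (k + 1) *
          ((q ^ (k + 1) / qnum q (k + 1)) • (1 : A) - R (k + 1)) *
          Asym q R (k + 1))

namespace QAntisym

lemma qnum_zero (q : ℂ) : qnum q 0 = 0 := by simp [qnum]

lemma qnum_one {q : ℂ} (h : q - q⁻¹ ≠ 0) : qnum q 1 = 1 := by
  simp only [qnum, pow_one]; exact div_self h

lemma qnum_rec {q : ℂ} (h : q - q⁻¹ ≠ 0) (j : ℕ) :
    qnum q (j + 1) = q ^ j + q⁻¹ * qnum q j := by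
  have key : qnum q (j + 1) - q⁻¹ * qnum q j = q ^ j := by
    rw [qnum, qnum, ← mul_div_assoc, div_sub_div_same,
      show q ^ (j+1) - q⁻¹ ^ (j+1) - q⁻¹ * (q ^ j - q⁻¹ ^ j) = q ^ j * (q - q⁻¹) from by ring,
      mul_div_cancel_right₀ _ h]
  linear_combination key


lemma qnum_rec' {q : ℂ} (hq : q ≠ 0) (hq2 : q - q⁻¹ ≠ 0) (j : ℕ) :
    q * qnum q (j + 1) = q ^ j * q + qnum q j := by
  rw [qnum_rec hq2 j, mul_add, ← mul_assoc, mul_inv_cancel₀ hq, one_mul]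
  ring


lemma sc_idem (q p X Y Z : ℂ) (hq : q ≠ 0) (hX : X ≠ 0) (hZ : Z ≠ 0)
    (h2 : q * Z = p * q * q + X) (h1 : q * X = p * q + Y) :
    (X/Z) * (X/Z) * (((p*q)/X) * ((p*q)/X) + p/X) = (X/Z) * ((p*q)/X) ∧
    (X/Z) * (X/Z) * ((((q - q⁻¹) * p - q⁻¹ * q⁻¹ * Y)/X) - 2 * ((p*q)/X)) = -(X/Z) := by
  constructor
  · field_simp
    linear_combination (-p) * h2
  · field_simp
    linear_combination q * h2 + h1

lemma sc_abs (q p X Z : ℂ) (hq : q ≠ 0) (hX : X ≠ 0) (hZ : Z ≠ 0)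
    (h2 : q * Z = p * q + X) :
    ((p*q)/Z) * (p/X) - q * (p/X) + q⁻¹ * ((p*q)/Z) = 0 ∧
    -(p/X) + q⁻¹ * ((p*q)/Z) * (p/X) + q⁻¹ * q⁻¹ * ((p*q)/Z) = 0 := by
  constructor
  · field_simp
    linear_combination (-p) * h2
  · field_simp
    linear_combination (-p) * h2

lemma sc_q (q P X Z : ℂ) (hq : q ≠ 0) (hX : X ≠ 0) (hZ : Z ≠ 0) :
    (X/Z) * (P/X) * (q - q⁻¹) - (X/Z) * q⁻¹ * q⁻¹ = ((q - q⁻¹) * P - q⁻¹*q⁻¹*X)/Z ∧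
    (X/Z) * (P/X) = P/Z := by
  constructor <;> field_simp

section
variable {A : Type*} [Ring A] [Algebra ℂ A]

lemma Asym_zero (q : ℂ) (R : ℕ → A) : Asym q R 0 = 1 := rfl
lemma Asym_one (q : ℂ) (R : ℕ → A) : Asym q R 1 = 1 := rfl
lemma Asym_succ (q : ℂ) (R : ℕ → A) (k : ℕ) :
    Asym q R (k + 2) =
      (qnum q (k + 1) / qnum q (k + 2)) •
        (Asym q R (k + 1) *
          ((q ^ (k + 1) / qnum q (k + 1)) • (1 : A) - R (k + 1)) *
          Asym q R (k + 1)) := rfl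

/-- `R k` commutes with `Asym m` when `m + 1 ≤ k`. -/
lemma commute_asym (q : ℂ) (R : ℕ → A)
    (hfar : ∀ i j : ℕ, 1 ≤ i → i + 2 ≤ j → R i * R j = R j * R i) (k : ℕ) :
    ∀ m : ℕ, m + 1 ≤ k → Commute (R k) (Asym q R m) := by
  intro m
  induction m using Nat.strong_induction_on with
  | _ m IH =>
    match m with
    | 0 => intro _; rw [Asym_zero]; exact Commute.one_right _
    | 1 => intro _; rw [Asym_one]; exact Commute.one_right _
    | (j + 2) =>
      intro h
      have h1 : Commute (R k) (Asym q R (j + 1)) := IH (j + 1) (by omega) (by omega)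
      have h2 : Commute (R k) (R (j + 1)) := (hfar (j + 1) k (by omega) (by omega)).symm
      rw [Asym_succ]
      exact (((h1.mul_right ((((Commute.one_right (R k)).smul_right _)).sub_right
        h2)).mul_right h1)).smul_right _

lemma hecke' (q : ℂ) (hq : q ≠ 0) (s : A)
    (hhecke : (s - q • (1 : A)) * (s + q⁻¹ • (1 : A)) = 0) :
    s * s = (q - q⁻¹) • s + 1 := by
  have expand : (s - q • (1 : A)) * (s + q⁻¹ • (1 : A)) =
      s * s - (q - q⁻¹) • s - (q * q⁻¹) • (1 : A) := by
    simp only [mul_add, sub_mul, smul_mul_assoc, mul_smul_comm, smul_smul, one_mul, mul_one]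
    match_scalars <;> ring
  rw [expand, mul_inv_cancel₀ hq, one_smul, sub_sub] at hhecke
  exact sub_eq_zero.mp hhecke

/-- Level-2 absorption computations. -/
lemma level2_left (q : ℂ) (hq : q ≠ 0) (s : A) (hh : s * s = (q - q⁻¹) • s + 1) :
    s * (q • (1 : A) - s) = (-q⁻¹) • (q • (1 : A) - s) := by
  simp only [mul_sub, sub_mul, mul_smul_comm, smul_mul_assoc, mul_one, one_mul, hh]
  match_scalars <;> field_simp <;> ring

lemma level2_right (q : ℂ) (hq : q ≠ 0) (s : A) (hh : s * s = (q - q⁻¹) • s + 1) :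
    (q • (1 : A) - s) * s = (-q⁻¹) • (q • (1 : A) - s) := by
  simp only [mul_sub, sub_mul, mul_smul_comm, smul_mul_assoc, mul_one, one_mul, hh]
  match_scalars <;> field_simp <;> ring

/-- Left absorption core computation. -/
lemma core_left (q β γ : ℂ) (a' a'' s t : A)
    (hcomm : s * a'' = a'' * s)
    (hbraid : t * s * t = s * t * s)
    (hhecke : s * s = (q - q⁻¹) • s + 1)
    (habs : t * a' = (-q⁻¹) • a')
    (haa : a'' * a' = a')
    (hc1 : β * γ - q * γ + q⁻¹ * β = 0)
    (hc2 : -γ + q⁻¹ * β * γ + q⁻¹ * q⁻¹ * β = 0) :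
    s * (a'' * ((γ • (1:A) - t) * (a'' * ((β • (1:A) - s) * a')))) =
      (-q⁻¹) • (a'' * ((γ • (1:A) - t) * (a'' * ((β • (1:A) - s) * a')))) := by
  have hcomm' : ∀ x : A, s * (a'' * x) = a'' * (s * x) := by
    intro x; rw [← mul_assoc, hcomm, mul_assoc]
  have hbr : ∀ x : A, s * (t * (s * x)) = t * (s * (t * x)) := by
    intro x
    rw [← mul_assoc, ← mul_assoc, ← hbraid, mul_assoc, mul_assoc]
  have hh : ∀ x : A, s * (s * x) = (q - q⁻¹) • (s * x) + x := by
    intro x; rw [← mul_assoc, hhecke, add_mul, smul_mul_assoc, one_mul]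
  have hw : a'' * (s * a') = s * a' := by
    rw [← mul_assoc, ← hcomm, mul_assoc, haa]
  simp only [mul_sub, sub_mul, mul_add, add_mul, smul_mul_assoc, mul_smul_comm, smul_add,
    smul_sub, smul_smul, mul_one, one_mul, mul_assoc, hcomm', hbr, hh, hw, habs, haa]
  match_scalars
  · linear_combination hc1
  · linear_combination hc2
  · ring

/-- Right absorption core computation. -/
lemma core_right (q β γ : ℂ) (a' a'' s t : A)
    (hcomm : s * a'' = a'' * s)
    (hbraid : t * s * t = s * t * s)
    (hhecke : s * s = (q - q⁻¹) • s + 1)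
    (habs : a' * t = (-q⁻¹) • a')
    (haa : a' * a'' = a')
    (hc1 : β * γ - q * γ + q⁻¹ * β = 0)
    (hc2 : -γ + q⁻¹ * β * γ + q⁻¹ * q⁻¹ * β = 0) :
    (a' * ((β • (1:A) - s) * (a'' * ((γ • (1:A) - t) * a'')))) * s =
      (-q⁻¹) • (a' * ((β • (1:A) - s) * (a'' * ((γ • (1:A) - t) * a'')))) := by
  have hcomm' : ∀ x : A, s * (a'' * x) = a'' * (s * x) := by
    intro x; rw [← mul_assoc, hcomm, mul_assoc]
  have hcomm2 : a'' * s = s * a'' := hcomm.symm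
  have hbr : ∀ x : A, s * (t * (s * x)) = t * (s * (t * x)) := by
    intro x
    rw [← mul_assoc, ← mul_assoc, ← hbraid, mul_assoc, mul_assoc]
  have hh : ∀ x : A, s * (s * x) = (q - q⁻¹) • (s * x) + x := by
    intro x; rw [← mul_assoc, hhecke, add_mul, smul_mul_assoc, one_mul]
  have hab : ∀ x : A, a' * (t * x) = (-q⁻¹) • (a' * x) := by
    intro x; rw [← mul_assoc, habs, smul_mul_assoc]
  have hm2 : ∀ x : A, a' * (a'' * x) = a' * x := by
    intro x; rw [← mul_assoc, haa]
  have hm3 : a' * (s * a'') = a' * s := by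
    rw [hcomm, ← mul_assoc, haa]
  simp only [mul_sub, sub_mul, mul_add, add_mul, smul_mul_assoc, mul_smul_comm, smul_add,
    smul_sub, smul_smul, mul_one, one_mul, mul_assoc, hcomm', hcomm2, hbr, hh, hhecke, hab,
    hm2, hm3, habs, haa]
  match_scalars
  · linear_combination hc1
  · linear_combination hc2
  · ring

lemma core_Q (q c β : ℂ) (a a' s t : A)
    (hmid : a = c • (a' * (β • (1:A) - t) * a'))
    (haa' : a * a' = a) (ha'a : a' * a = a)
    (hcomm : s * a' = a' * s)
    (hhecke : s * s = (q - q⁻¹) • s + 1)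
    (hbraid : t * s * t = s * t * s)
    (habsL : t * a = (-q⁻¹) • a) (habsR : a * t = (-q⁻¹) • a)
    (haa : a * a = a) :
    a * (s * (a * (s * a))) =
      (c * β * (q - q⁻¹) - c * q⁻¹ * q⁻¹) • (a * (s * a)) + (c * β) • a := by
  have w1 : a' * (s * a) = s * a := by rw [← mul_assoc, ← hcomm, mul_assoc, ha'a]
  have u1 : ∀ x : A, s * (a' * x) = a' * (s * x) := by
    intro x; rw [← mul_assoc, hcomm, mul_assoc]
  have u2 : ∀ x : A, a * (a' * x) = a * x := by
    intro x; rw [← mul_assoc, haa']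
  have hbr : ∀ x : A, s * (t * (s * x)) = t * (s * (t * x)) := by
    intro x; rw [← mul_assoc, ← mul_assoc, ← hbraid, mul_assoc, mul_assoc]
  have hh : ∀ x : A, s * (s * x) = (q - q⁻¹) • (s * x) + x := by
    intro x; rw [← mul_assoc, hhecke, add_mul, smul_mul_assoc, one_mul]
  have habR' : ∀ x : A, a * (t * x) = (-q⁻¹) • (a * x) := by
    intro x; rw [← mul_assoc, habsR, smul_mul_assoc]
  nth_rewrite 2 [hmid]
  simp only [mul_sub, sub_mul, mul_add, add_mul, smul_mul_assoc, mul_smul_comm, smul_add,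
    smul_sub, smul_smul, mul_one, one_mul, mul_assoc, w1, u1, u2, hbr, hh, hhecke, habsL,
    habR', haa, haa', ha'a]
  match_scalars <;> ring

lemma core_idem (c β lam mu : ℂ) (a' s : A)
    (ha' : a' * a' = a')
    (hQ : a' * (s * (a' * (s * a'))) = lam • (a' * (s * a')) + mu • a')
    (hc1 : c * c * (β * β + mu) = c * β)
    (hc2 : c * c * (lam - 2 * β) = -c) :
    (c • (a' * (β • (1:A) - s) * a')) * (c • (a' * (β • (1:A) - s) * a')) =
      c • (a' * (β • (1:A) - s) * a') := by
  have ha'' : ∀ x : A, a' * (a' * x) = a' * x := by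
    intro x; rw [← mul_assoc, ha']
  simp only [mul_sub, sub_mul, mul_add, add_mul, smul_mul_assoc, mul_smul_comm, smul_add,
    smul_sub, smul_smul, mul_one, one_mul, mul_assoc, ha', ha'', hQ]
  match_scalars
  · linear_combination hc1
  · linear_combination hc2

lemma absorb_left (q : ℂ) (R : ℕ → A) (k : ℕ)
    (idem' : Asym q R (k+1) * Asym q R (k+1) = Asym q R (k+1)) :
    Asym q R (k+1) * Asym q R (k+2) = Asym q R (k+2) := by
  rw [Asym_succ, mul_smul_comm, ← mul_assoc, ← mul_assoc, idem']

lemma absorb_right (q : ℂ) (R : ℕ → A) (k : ℕ)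
    (idem' : Asym q R (k+1) * Asym q R (k+1) = Asym q R (k+1)) :
    Asym q R (k+2) * Asym q R (k+1) = Asym q R (k+2) := by
  rw [Asym_succ, smul_mul_assoc, mul_assoc _ _ (Asym q R (k+1)), idem']


lemma Asym_two (q : ℂ) (R : ℕ → A) :
    Asym q R 2 =
      (qnum q 1 / qnum q 2) • ((1:A) * ((q ^ 1 / qnum q 1) • (1 : A) - R 1) * 1) := rfl

lemma abs_two (q : ℂ) (hq : q ≠ 0) (hq2 : q - q⁻¹ ≠ 0) (R : ℕ → A)
    (hh1 : R 1 * R 1 = (q - q⁻¹) • R 1 + 1) :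
    R 1 * Asym q R 2 = (-q⁻¹) • Asym q R 2 ∧
      Asym q R 2 * R 1 = (-q⁻¹) • Asym q R 2 := by
  have hb : (q:ℂ) ^ 1 / qnum q 1 = q := by rw [qnum_one hq2, pow_one, div_one]
  rw [Asym_two, hb, one_mul, mul_one]
  constructor
  · rw [mul_smul_comm, level2_left q hq (R 1) hh1, smul_comm]
  · rw [smul_mul_assoc, level2_right q hq (R 1) hh1, smul_comm]

end
end QAntisym

namespace QAntisym
section
variable {A : Type*} [Ring A] [Algebra ℂ A]

lemma master (n : ℕ) (q : ℂ) (hq : q ≠ 0) (hq2 : q - q⁻¹ ≠ 0) (R : ℕ → A)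
    (hbraid : ∀ i : ℕ, 1 ≤ i → R i * R (i + 1) * R i = R (i + 1) * R i * R (i + 1))
    (hfar : ∀ i j : ℕ, 1 ≤ i → i + 2 ≤ j → R i * R j = R j * R i)
    (hhecke : ∀ i : ℕ, 1 ≤ i → (R i - q • (1 : A)) * (R i + q⁻¹ • (1 : A)) = 0)
    (hqnum : ∀ i : ℕ, 2 ≤ i → i ≤ n → qnum q i ≠ 0) :
    ∀ m : ℕ, 1 ≤ m → m ≤ n →
      (Asym q R m * Asym q R m = Asym q R m) ∧
      (∀ j, 1 ≤ j → j + 1 ≤ m → R j * Asym q R m = (-q⁻¹) • Asym q R m ∧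
          Asym q R m * R j = (-q⁻¹) • Asym q R m) ∧
      (Asym q R m * (R m * (Asym q R m * (R m * Asym q R m))) =
        (((q - q⁻¹) * q ^ (m - 1) - q⁻¹ * q⁻¹ * qnum q (m - 1)) / qnum q m) •
            (Asym q R m * (R m * Asym q R m))
          + (q ^ (m - 1) / qnum q m) • Asym q R m) := by
  have heck : ∀ i : ℕ, 1 ≤ i → R i * R i = (q - q⁻¹) • R i + 1 :=
    fun i hi => hecke' q hq (R i) (hhecke i hi)
  intro m
  induction m using Nat.strong_induction_on with
  | _ m IH =>
    match m with
    | 0 => intro h; omega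
    | 1 =>
      intro _ h1n
      refine ⟨by rw [Asym_one, one_mul], fun j hj hjm => by omega, ?_⟩
      rw [Asym_one]
      simp only [one_mul, mul_one, Nat.sub_self, pow_zero, qnum_zero, qnum_one hq2]
      rw [heck 1 le_rfl]
      match_scalars <;> ring
    | (k + 2) =>
      intro _ hmn
      obtain ⟨idem', habs', hQ'⟩ := IH (k + 1) (by omega) (by omega) (by omega)
      have hnum2 : qnum q (k + 2) ≠ 0 := hqnum (k + 2) (by omega) hmn
      have hnum1 : qnum q (k + 1) ≠ 0 := by
        match k with
        | 0 => rw [qnum_one hq2]; exact one_ne_zero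
        | (k' + 1) => exact hqnum (k' + 2) (by omega) (by omega)
      have h2 : q * qnum q (k + 2) = q ^ k * q * q + qnum q (k + 1) := by
        have h := qnum_rec' hq hq2 (k + 1)
        rw [pow_succ] at h
        exact h
      have h1 : q * qnum q (k + 1) = q ^ k * q + qnum q k := qnum_rec' hq hq2 k
      -- idempotency
      have hQ'' : Asym q R (k+1) * (R (k+1) * (Asym q R (k+1) * (R (k+1) * Asym q R (k+1)))) =
          (((q - q⁻¹) * q ^ k - q⁻¹ * q⁻¹ * qnum q k) / qnum q (k+1)) •
              (Asym q R (k+1) * (R (k+1) * Asym q R (k+1)))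
            + (q ^ k / qnum q (k+1)) • Asym q R (k+1) := by
        simpa using hQ'
      have hsc := sc_idem q (q ^ k) (qnum q (k+1)) (qnum q k) (qnum q (k+2)) hq hnum1 hnum2 h2 h1
      have hidem : Asym q R (k + 2) * Asym q R (k + 2) = Asym q R (k + 2) := by
        rw [Asym_succ q R k]
        refine core_idem _ _ _ _ _ _ idem' hQ'' ?_ ?_
        · rw [pow_succ]; exact hsc.1
        · rw [pow_succ]; exact hsc.2
      -- absorption properties of Asym (k+1) in Asym (k+2)
      have haaL' : Asym q R (k+1) * Asym q R (k+2) = Asym q R (k+2) := absorb_left q R k idem'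
      have haaR' : Asym q R (k+2) * Asym q R (k+1) = Asym q R (k+2) := absorb_right q R k idem'
      -- top absorption
      have htop : R (k + 1) * Asym q R (k + 2) = (-q⁻¹) • Asym q R (k + 2) ∧
          Asym q R (k + 2) * R (k + 1) = (-q⁻¹) • Asym q R (k + 2) := by
        rcases k with _ | k'
        · exact abs_two q hq hq2 R (heck 1 le_rfl)
        · -- level k' + 3
          have e1 : k' + 1 + 1 = k' + 2 := rfl
          have e2 : k' + 1 + 2 = k' + 3 := rfl
          simp only [e1, e2] at idem' habs' hnum1 hnum2 ⊢
          obtain ⟨idem'', -, -⟩ := IH (k' + 1) (by omega) (by omega) (by omega)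
          have hnum0 : qnum q (k' + 1) ≠ 0 := by
            match k' with
            | 0 => rw [qnum_one hq2]; exact one_ne_zero
            | (j + 1) => exact hqnum (j + 2) (by omega) (by omega)
          have hcommt : R (k'+2) * Asym q R (k'+1) = Asym q R (k'+1) * R (k'+2) :=
            (commute_asym q R hfar (k'+2) (k'+1) (by omega)).eq
          have hbr : R (k'+1) * R (k'+2) * R (k'+1) = R (k'+2) * R (k'+1) * R (k'+2) :=
            hbraid (k'+1) (by omega)
          have habsA : R (k'+1) * Asym q R (k'+2) = (-q⁻¹) • Asym q R (k'+2) :=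
            (habs' (k'+1) (by omega) (by omega)).1
          have habsB : Asym q R (k'+2) * R (k'+1) = (-q⁻¹) • Asym q R (k'+2) :=
            (habs' (k'+1) (by omega) (by omega)).2
          have haaL : Asym q R (k'+1) * Asym q R (k'+2) = Asym q R (k'+2) :=
            absorb_left q R k' idem''
          have haaR : Asym q R (k'+2) * Asym q R (k'+1) = Asym q R (k'+2) :=
            absorb_right q R k' idem''
          have h2' : q * qnum q (k'+2) = q ^ (k'+1) * q + qnum q (k'+1) :=
            qnum_rec' hq hq2 (k'+1)
          have hscA := sc_abs q (q ^ (k'+1)) (qnum q (k'+1)) (qnum q (k'+2)) hq hnum0 hnum1 h2'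
          constructor
          · have hZL : Asym q R (k'+3) =
                ((qnum q (k'+2) / qnum q (k'+3)) * (qnum q (k'+1) / qnum q (k'+2))) •
                  (Asym q R (k'+1) *
                    (((q ^ (k'+1) / qnum q (k'+1)) • (1:A) - R (k'+1)) *
                      (Asym q R (k'+1) *
                        (((q ^ (k'+1) * q / qnum q (k'+2)) • (1:A) - R (k'+2)) *
                          Asym q R (k'+2))))) := by
              rw [show Asym q R (k'+3) =
                  (qnum q (k'+2) / qnum q (k'+3)) •
                    (Asym q R (k'+2) *
                      ((q ^ (k'+2) / qnum q (k'+2)) • (1:A) - R (k'+2)) *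
                      Asym q R (k'+2)) from Asym_succ q R (k'+1)]
              nth_rewrite 1 [Asym_succ q R k']
              rw [show (q:ℂ) ^ (k'+2) = q ^ (k'+1) * q from pow_succ q (k'+1)]
              simp only [smul_mul_assoc, mul_smul_comm, smul_smul, mul_assoc]
            rw [hZL, mul_smul_comm,
              core_left q (q ^ (k'+1) * q / qnum q (k'+2)) (q ^ (k'+1) / qnum q (k'+1))
                (Asym q R (k'+2)) (Asym q R (k'+1)) (R (k'+2)) (R (k'+1))
                hcommt hbr (heck (k'+2) (by omega)) habsA haaL hscA.1 hscA.2,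
              smul_comm]
          · have hZR : Asym q R (k'+3) =
                ((qnum q (k'+2) / qnum q (k'+3)) * (qnum q (k'+1) / qnum q (k'+2))) •
                  (Asym q R (k'+2) *
                    (((q ^ (k'+1) * q / qnum q (k'+2)) • (1:A) - R (k'+2)) *
                      (Asym q R (k'+1) *
                        (((q ^ (k'+1) / qnum q (k'+1)) • (1:A) - R (k'+1)) *
                          Asym q R (k'+1))))) := by
              rw [show Asym q R (k'+3) =
                  (qnum q (k'+2) / qnum q (k'+3)) •
                    (Asym q R (k'+2) *
                      ((q ^ (k'+2) / qnum q (k'+2)) • (1:A) - R (k'+2)) *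
                      Asym q R (k'+2)) from Asym_succ q R (k'+1)]
              nth_rewrite 2 [Asym_succ q R k']
              rw [show (q:ℂ) ^ (k'+2) = q ^ (k'+1) * q from pow_succ q (k'+1)]
              simp only [smul_mul_assoc, mul_smul_comm, smul_smul, mul_assoc]
            rw [hZR, smul_mul_assoc,
              core_right q (q ^ (k'+1) * q / qnum q (k'+2)) (q ^ (k'+1) / qnum q (k'+1))
                (Asym q R (k'+2)) (Asym q R (k'+1)) (R (k'+2)) (R (k'+1))
                hcommt hbr (heck (k'+2) (by omega)) habsB haaR hscA.1 hscA.2,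
              smul_comm]
      -- all absorptions
      have habsnew : ∀ j, 1 ≤ j → j + 1 ≤ k + 2 →
          R j * Asym q R (k+2) = (-q⁻¹) • Asym q R (k+2) ∧
          Asym q R (k+2) * R j = (-q⁻¹) • Asym q R (k+2) := by
        intro j hj hjm
        by_cases hcase : j = k + 1
        · subst hcase; exact htop
        · obtain ⟨hL, hR⟩ := habs' j hj (by omega)
          constructor
          · rw [Asym_succ q R k, mul_smul_comm, ← mul_assoc, ← mul_assoc, hL,
              smul_mul_assoc, smul_mul_assoc, smul_comm]
          · rw [Asym_succ q R k, smul_mul_assoc, mul_assoc, mul_assoc, hR,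
              mul_smul_comm, mul_smul_comm, smul_comm]
            simp only [mul_assoc]
      refine ⟨hidem, habsnew, ?_⟩
      -- the Q identity at level k+2
      have hsq := sc_q q (q ^ (k+1)) (qnum q (k+1)) (qnum q (k+2)) hq hnum1 hnum2
      have hcQ := core_Q q (qnum q (k+1) / qnum q (k+2)) (q ^ (k+1) / qnum q (k+1))
        (Asym q R (k+2)) (Asym q R (k+1)) (R (k+2)) (R (k+1))
        (Asym_succ q R k) haaR' haaL'
        ((commute_asym q R hfar (k+2) (k+1) (by omega)).eq)
        (heck (k+2) (by omega)) (hbraid (k+1) (by omega))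
        (habsnew (k+1) (by omega) (by omega)).1 (habsnew (k+1) (by omega) (by omega)).2 hidem
      rw [hsq.1, hsq.2] at hcQ
      show Asym q R (k+2) * (R (k+2) * (Asym q R (k+2) * (R (k+2) * Asym q R (k+2)))) =
        (((q - q⁻¹) * q ^ (k+1) - q⁻¹ * q⁻¹ * qnum q (k+1)) / qnum q (k+2)) •
            (Asym q R (k+2) * (R (k+2) * Asym q R (k+2)))
          + (q ^ (k+1) / qnum q (k+2)) • Asym q R (k+2)
      exact hcQ

end
end QAntisym

/-- For a Hecke-type family of braid generators with the q-numbers `i_q ≠ 0` for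
`2 ≤ i ≤ n`, the q-antisymmetrizers `A^{(i)}`, `i ≤ n`, are idempotent. -/
theorem qAntisymmetrizer_idempotent {A : Type*} [Ring A] [Algebra ℂ A]
    (n : ℕ) (q : ℂ) (hq : q ≠ 0) (R : ℕ → A)
    (hbraid : ∀ i : ℕ, 1 ≤ i → R i * R (i + 1) * R i = R (i + 1) * R i * R (i + 1))
    (hfar : ∀ i j : ℕ, 1 ≤ i → i + 2 ≤ j → R i * R j = R j * R i)
    (hhecke : ∀ i : ℕ, 1 ≤ i → (R i - q • (1 : A)) * (R i + q⁻¹ • (1 : A)) = 0)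
    (hqnum : ∀ i : ℕ, 2 ≤ i → i ≤ n → qnum q i ≠ 0) :
    ∀ i : ℕ, i ≤ n → Asym q R i * Asym q R i = Asym q R i := by
  intro i hin
  match i with
  | 0 => rw [QAntisym.Asym_zero, one_mul]
  | 1 => rw [QAntisym.Asym_one, one_mul]
  | (k + 2) =>
    have hq2 : q - q⁻¹ ≠ 0 := by
      intro h
      exact hqnum 2 le_rfl (by omega) (by rw [qnum, h, div_zero])
    exact (QAntisym.master n q hq hq2 R hbraid hfar hhecke hqnum (k + 2) (by omega) hin).1
end
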